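/- Let f and g be generalized polynomials with nonnegative real coefficients and nonnegative rational exponents (with some common denominators). If Ψ(f(t)^n) = Ψ(g(t)^n) as polynomials for every positive integer n, then f = g. -/

import Mathlib

open Finsupp

/-- Evaluation of a generalized polynomial `∑ c_j t^j` (a finitely supported
function `ℚ →₀ ℝ`, with convolution product) at a positive real `x`, using
real exponentiation. -/
noncomputable def gpEval (f : AddMonoidAlgebra ℝ ℚ) (x : ℝ) : ℝ :=
  f.coeff.sum fun j c => c * x ^ (j : ℝ)

/-- The linear rounding operator `Ψ` with `Ψ(t^j) = t^⌈j⌉`. -/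
noncomputable def gpPsi (f : AddMonoidAlgebra ℝ ℚ) : AddMonoidAlgebra ℝ ℚ :=
  AddMonoidAlgebra.ofCoeff (Finsupp.mapDomain (fun j => (⌈j⌉ : ℚ)) f.coeff)


/-- The evaluation monoid hom on exponents. -/
noncomputable def expHom (x : ℝ) (hx : 0 < x) : Multiplicative ℚ →* ℝ where
  toFun j := x ^ ((Multiplicative.toAdd j : ℚ) : ℝ)
  map_one' := by simp
  map_mul' a b := by
    simp only [toAdd_mul, Rat.cast_add]
    exact Real.rpow_add hx _ _

lemma gpEval_eq (f : AddMonoidAlgebra ℝ ℚ) (x : ℝ) (hx : 0 < x) :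
    gpEval f x = (AddMonoidAlgebra.lift ℝ ℝ ℚ) (expHom x hx) f := by
  rw [AddMonoidAlgebra.lift_apply]
  simp [gpEval, expHom, smul_eq_mul]

lemma gpEval_pow (f : AddMonoidAlgebra ℝ ℚ) (x : ℝ) (hx : 0 < x) (n : ℕ) :
    gpEval (f ^ n) x = (gpEval f x) ^ n := by
  rw [gpEval_eq _ _ hx, gpEval_eq _ _ hx, map_pow]

lemma coeff_mul_nonneg (f g : AddMonoidAlgebra ℝ ℚ) (hf : ∀ j, 0 ≤ f.coeff j)
    (hg : ∀ j, 0 ≤ g.coeff j) : ∀ j, 0 ≤ (f * g).coeff j := by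
  intro j
  classical
  rw [AddMonoidAlgebra.coeff_mul]
  refine Finset.sum_nonneg fun a _ => Finset.sum_nonneg fun b _ => ?_
  simp only []
  split
  · exact mul_nonneg (hf a) (hg b)
  · exact le_refl _

lemma coeff_pow_nonneg (f : AddMonoidAlgebra ℝ ℚ) (hf : ∀ j, 0 ≤ f.coeff j) (n : ℕ) :
    ∀ j, 0 ≤ (f ^ n).coeff j := by
  induction n with
  | zero =>
    intro j
    show (0:ℝ) ≤ (1 : AddMonoidAlgebra ℝ ℚ).coeff j
    rw [AddMonoidAlgebra.one_def, AddMonoidAlgebra.coeff_single, Finsupp.single_apply]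
    split <;> norm_num
  | succ n ih =>
    rw [pow_succ]
    exact coeff_mul_nonneg _ _ ih hf

lemma gpEval_nonneg (f : AddMonoidAlgebra ℝ ℚ) (hf : ∀ j, 0 ≤ f.coeff j) (x : ℝ) (hx : 0 < x) :
    0 ≤ gpEval f x :=
  Finset.sum_nonneg fun j _ => mul_nonneg (hf j) (Real.rpow_pos_of_pos hx _).le

lemma gpEval_psi_eq (h : AddMonoidAlgebra ℝ ℚ) (x : ℝ) :
    gpEval (gpPsi h) x = h.coeff.sum fun j c => c * x ^ (((⌈j⌉ : ℚ)) : ℝ) := by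
  unfold gpEval gpPsi
  exact Finsupp.sum_mapDomain_index (fun b => zero_mul _) (fun b m₁ m₂ => add_mul _ _ _)

lemma psi_lower (h : AddMonoidAlgebra ℝ ℚ) (hh : ∀ j, 0 ≤ h.coeff j) (x : ℝ) (hx : 1 ≤ x) :
    gpEval h x ≤ gpEval (gpPsi h) x := by
  rw [gpEval_psi_eq]
  refine Finset.sum_le_sum fun j _ => ?_
  refine mul_le_mul_of_nonneg_left (Real.rpow_le_rpow_of_exponent_le hx ?_) (hh j)
  exact_mod_cast Int.le_ceil j

lemma psi_upper (h : AddMonoidAlgebra ℝ ℚ) (hh : ∀ j, 0 ≤ h.coeff j) (x : ℝ) (hx : 1 ≤ x) :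
    gpEval (gpPsi h) x ≤ x * gpEval h x := by
  rw [gpEval_psi_eq, gpEval, Finsupp.sum, Finsupp.sum, Finset.mul_sum]
  refine Finset.sum_le_sum fun j _ => ?_
  have h1 : ((⌈j⌉ : ℚ) : ℝ) ≤ (j : ℝ) + 1 := by
    have := (Int.ceil_lt_add_one j).le
    exact_mod_cast this
  calc h.coeff j * x ^ (((⌈j⌉ : ℚ)) : ℝ) ≤ h.coeff j * x ^ ((j : ℝ) + 1) :=
        mul_le_mul_of_nonneg_left (Real.rpow_le_rpow_of_exponent_le hx h1) (hh j)
    _ = x * (h.coeff j * x ^ (j : ℝ)) := by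
        rw [Real.rpow_add (lt_of_lt_of_le one_pos hx), Real.rpow_one]; ring

lemma le_of_pow_le_mul_pow {F G x : ℝ} (hF : 0 ≤ F) (hG : 0 ≤ G) (hx : 1 ≤ x)
    (h : ∀ n : ℕ, 0 < n → F ^ n ≤ x * G ^ n) : F ≤ G := by
  by_contra hc
  push_neg at hc
  rcases eq_or_lt_of_le hG with hG0 | hG0
  · have h1 := h 1 one_pos
    rw [← hG0] at h1
    simp at h1
    exact absurd (h1.trans hG) (not_le.mpr hc)
  · have h1 : 1 < F / G := (one_lt_div hG0).mpr hc
    have := (tendsto_pow_atTop_atTop_of_one_lt h1).eventually_gt_atTop x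
    obtain ⟨n, hn1, hn2⟩ := (this.and (Filter.eventually_gt_atTop 0)).exists
    have : (F / G) ^ n ≤ x := by
      rw [div_pow, div_le_iff₀ (pow_pos hG0 n)]
      exact h n hn2
    exact absurd this (not_le.mpr hn1)

lemma gpEval_eq_of_psi (f g : AddMonoidAlgebra ℝ ℚ)
    (hfpos : ∀ j, 0 ≤ f.coeff j) (hgpos : ∀ j, 0 ≤ g.coeff j)
    (h : ∀ n : ℕ, 0 < n → gpPsi (f ^ n) = gpPsi (g ^ n))
    (x : ℝ) (hx : 1 ≤ x) : gpEval f x = gpEval g x := by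
  have hx0 : (0:ℝ) < x := lt_of_lt_of_le one_pos hx
  have key : ∀ (a b : AddMonoidAlgebra ℝ ℚ), (∀ j, 0 ≤ a.coeff j) → (∀ j, 0 ≤ b.coeff j) →
      (∀ n : ℕ, 0 < n → gpPsi (a ^ n) = gpPsi (b ^ n)) → gpEval a x ≤ gpEval b x := by
    intro a b ha hb hab
    refine le_of_pow_le_mul_pow (gpEval_nonneg a ha x hx0) (gpEval_nonneg b hb x hx0) hx
      fun n hn => ?_
    calc (gpEval a x) ^ n = gpEval (a ^ n) x := (gpEval_pow a x hx0 n).symm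
      _ ≤ gpEval (gpPsi (a ^ n)) x := psi_lower _ (coeff_pow_nonneg a ha n) x hx
      _ = gpEval (gpPsi (b ^ n)) x := by rw [hab n hn]
      _ ≤ x * gpEval (b ^ n) x := psi_upper _ (coeff_pow_nonneg b hb n) x hx
      _ = x * (gpEval b x) ^ n := by rw [gpEval_pow b x hx0 n]
  exact le_antisymm (key f g hfpos hgpos h) (key g f hgpos hfpos fun n hn => (h n hn).symm)

lemma phi_eq (r : ℕ) (hr : 0 < r) (i : ℕ) : (((i : ℚ) / r * r).num).toNat = i := by
  have hrne : (r : ℚ) ≠ 0 := Nat.cast_ne_zero.mpr hr.ne'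
  rw [div_mul_cancel₀ _ hrne]
  simp

lemma poly_eval (f : AddMonoidAlgebra ℝ ℚ) (r : ℕ) (hr : 0 < r)
    (hsupp : ∀ j ∈ f.coeff.support, ∃ i : ℕ, j = (i : ℚ) / r) (y : ℝ) (hy : 0 ≤ y) :
    (⟨AddMonoidAlgebra.ofCoeff (Finsupp.mapDomain (fun j => ((j * r : ℚ).num).toNat) f.coeff)⟩ : Polynomial ℝ).eval y
      = gpEval f (y ^ (r : ℝ)) := by
  rw [Polynomial.eval_eq_sum]
  have h1 : (⟨AddMonoidAlgebra.ofCoeff (Finsupp.mapDomain (fun j => ((j * r : ℚ).num).toNat) f.coeff)⟩ : Polynomial ℝ).sum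
      (fun e a => a * y ^ e)
      = (Finsupp.mapDomain (fun j => ((j * r : ℚ).num).toNat) f.coeff).sum fun e a => a * y ^ e := by
    rw [Polynomial.sum_def, Finsupp.sum]
    rfl
  rw [h1, Finsupp.sum_mapDomain_index (h := fun e a => a * y ^ e) (fun b => zero_mul _)
    (fun b m₁ m₂ => add_mul _ _ _)]
  unfold gpEval
  refine Finset.sum_congr rfl fun j hj => ?_
  obtain ⟨i, hi⟩ := hsupp j hj
  subst hi
  simp only []
  rw [phi_eq r hr i]
  congr 1
  have hrne : (r : ℝ) ≠ 0 := Nat.cast_ne_zero.mpr hr.ne'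
  have hcast : (((i : ℚ) / r : ℚ) : ℝ) = (i : ℝ) / r := by push_cast; ring
  rw [hcast, ← Real.rpow_natCast y i, ← Real.rpow_mul hy]
  congr 1
  field_simp

theorem stmt_5 (f g : AddMonoidAlgebra ℝ ℚ)
    (hf : ∃ r : ℕ, 0 < r ∧ ∀ j ∈ f.coeff.support, ∃ i : ℕ, j = (i : ℚ) / r)
    (hg : ∃ r : ℕ, 0 < r ∧ ∀ j ∈ g.coeff.support, ∃ i : ℕ, j = (i : ℚ) / r)
    (hfpos : ∀ j, 0 ≤ f.coeff j) (hgpos : ∀ j, 0 ≤ g.coeff j)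
    (h : ∀ n : ℕ, 0 < n → gpPsi (f ^ n) = gpPsi (g ^ n)) :
    f = g := by
  obtain ⟨rf, hrf, hfsupp⟩ := hf
  obtain ⟨rg, hrg, hgsupp⟩ := hg
  set r : ℕ := rf * rg with hrdef
  have hr : 0 < r := Nat.mul_pos hrf hrg
  have hrne : (r : ℚ) ≠ 0 := Nat.cast_ne_zero.mpr hr.ne'
  have hfsupp' : ∀ j ∈ f.coeff.support, ∃ i : ℕ, j = (i : ℚ) / r := by
    intro j hj
    obtain ⟨i, hi⟩ := hfsupp j hj
    exact ⟨i * rg, by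
      subst hi; rw [hrdef]; push_cast
      rw [div_eq_div_iff (by positivity) (by positivity)]; ring⟩
  have hgsupp' : ∀ j ∈ g.coeff.support, ∃ i : ℕ, j = (i : ℚ) / r := by
    intro j hj
    obtain ⟨i, hi⟩ := hgsupp j hj
    exact ⟨i * rf, by
      subst hi; rw [hrdef]; push_cast
      rw [div_eq_div_iff (by positivity) (by positivity)]; ring⟩
  set φ : ℚ → ℕ := fun j => ((j * r : ℚ).num).toNat with hφ
  set P : Polynomial ℝ := ⟨AddMonoidAlgebra.ofCoeff (Finsupp.mapDomain φ f.coeff)⟩ with hP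
  set Q : Polynomial ℝ := ⟨AddMonoidAlgebra.ofCoeff (Finsupp.mapDomain φ g.coeff)⟩ with hQ
  have hPQ : P = Q := by
    refine Polynomial.eq_of_infinite_eval_eq P Q (((Set.Ioi_infinite (1:ℝ))).mono ?_)
    intro y hy
    have hy1 : (1:ℝ) < y := hy
    have hy0 : (0:ℝ) ≤ y := by linarith
    have hx : (1:ℝ) ≤ y ^ (r : ℝ) := by
      calc (1:ℝ) = y ^ (0:ℝ) := by rw [Real.rpow_zero]
        _ ≤ y ^ (r : ℝ) := Real.rpow_le_rpow_of_exponent_le hy1.le (by positivity)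
    show P.eval y = Q.eval y
    rw [hP, hQ, poly_eval f r hr hfsupp' y hy0, poly_eval g r hr hgsupp' y hy0]
    exact gpEval_eq_of_psi f g hfpos hgpos h _ hx
  ext j
  by_cases hj : j ∈ f.coeff.support ∪ g.coeff.support
  · have hjS : ∃ i : ℕ, j = (i : ℚ) / r := by
      rcases Finset.mem_union.mp hj with hj | hj
      · exact hfsupp' j hj
      · exact hgsupp' j hj
    set S : Set ℚ := {j | ∃ i : ℕ, j = (i : ℚ) / r} with hS
    have hinj : Set.InjOn φ S := by
      rintro a ⟨ia, rfl⟩ b ⟨ib, rfl⟩ hab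
      simp only [hφ] at hab
      rw [phi_eq r hr, phi_eq r hr] at hab
      rw [hab]
    have hfj : (Finsupp.mapDomain φ f.coeff) (φ j) = f.coeff j :=
      Finsupp.mapDomain_apply' S f.coeff (fun a ha => hfsupp' a ha) hinj hjS
    have hgj : (Finsupp.mapDomain φ g.coeff) (φ j) = g.coeff j :=
      Finsupp.mapDomain_apply' S g.coeff (fun a ha => hgsupp' a ha) hinj hjS
    have : P.coeff (φ j) = Q.coeff (φ j) := by rw [hPQ]
    rw [hP, hQ] at this
    simpa [Polynomial.coeff, hfj, hgj] using this
  · rw [Finset.mem_union] at hj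
    push_neg at hj
    rw [Finsupp.notMem_support_iff.mp hj.1, Finsupp.notMem_support_iff.mp hj.2]
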